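/- Let Δ be a real symmetric n×n matrix such that I_n + Δ is positive semidefinite. Then for every integer r ≥ 1, ‖Δ^{∘(r+1)}‖ ≤ (1 + ‖Δ‖_max)·‖Δ^{∘r}‖ + ‖Δ‖_max^r. -/

import Mathlib

open MeasureTheory ProbabilityTheory Filter
open scoped NNReal

/-- Spectral (operator) norm of a real matrix. -/
noncomputable def specNorm {m p : Type*} [Fintype m] [Fintype p] [DecidableEq p]
    (M : Matrix m p ℝ) : ℝ :=
  ‖(Matrix.toEuclideanLin M).toContinuousLinearMap‖

/-- Entrywise maximum norm of a matrix. -/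
noncomputable def maxNorm {m p : Type*} [Fintype m] [Fintype p] (M : Matrix m p ℝ) : ℝ :=
  ⨆ i, ⨆ j, |M i j|

/-- `r`-fold Hadamard (entrywise) power of a matrix. -/
def hadPow {m : Type*} (M : Matrix m m ℝ) (r : ℕ) : Matrix m m ℝ :=
  Matrix.of fun i j => M i j ^ r

section Aux

open scoped Matrix.Norms.L2Operator RealInnerProductSpace

variable {n : ℕ}

lemma aux_specNorm_eq_norm (M : Matrix (Fin n) (Fin n) ℝ) : specNorm M = ‖M‖ := rfl

lemma aux_inner_euc (x y : EuclideanSpace ℝ (Fin n)) : ⟪x, y⟫ = ∑ i, x i * y i := by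
  simp [PiLp.inner_apply, RCLike.inner_apply, mul_comm]

lemma aux_mulVec_euc (M : Matrix (Fin n) (Fin n) ℝ) (v : EuclideanSpace ℝ (Fin n)) (i : Fin n) :
    ((Matrix.toEuclideanLin M).toContinuousLinearMap v) i = ∑ j, M i j * v j := by
  simp [Matrix.toEuclideanLin_apply, Matrix.mulVec, dotProduct]

lemma aux_norm_sq_eq (x : EuclideanSpace ℝ (Fin n)) : ‖x‖ ^ 2 = ∑ i, x i * x i := by
  rw [← real_inner_self_eq_norm_sq, aux_inner_euc]

lemma aux_norm_le_bilin (M : Matrix (Fin n) (Fin n) ℝ) (c : ℝ) (hc : 0 ≤ c)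
    (h : ∀ x y : EuclideanSpace ℝ (Fin n), |∑ i, ∑ j, x i * M i j * y j| ≤ c * ‖x‖ * ‖y‖) :
    ‖M‖ ≤ c := by
  have hdef : ‖M‖ = ‖(Matrix.toEuclideanLin M).toContinuousLinearMap‖ := rfl
  rw [hdef]
  refine ContinuousLinearMap.opNorm_le_bound _ hc fun y => ?_
  set T := (Matrix.toEuclideanLin M).toContinuousLinearMap with hT
  rcases eq_or_lt_of_le (norm_nonneg (T y)) with h0 | h0
  · rw [← h0]; positivity
  · have key : ‖T y‖ ^ 2 ≤ c * ‖y‖ * ‖T y‖ := by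
      calc ‖T y‖ ^ 2 = ∑ i, (T y) i * (T y) i := aux_norm_sq_eq _
        _ = ∑ i, ∑ j, (T y) i * M i j * y j := by
            refine Finset.sum_congr rfl fun i _ => ?_
            nth_rewrite 2 [aux_mulVec_euc]
            rw [Finset.mul_sum]
            exact Finset.sum_congr rfl fun j _ => by ring
        _ ≤ |∑ i, ∑ j, (T y) i * M i j * y j| := le_abs_self _
        _ ≤ c * ‖T y‖ * ‖y‖ := h (T y) y
        _ = c * ‖y‖ * ‖T y‖ := by ring
    nlinarith [sq_nonneg (‖T y‖)]

lemma aux_bilin_le_norm (B : Matrix (Fin n) (Fin n) ℝ) (u v : EuclideanSpace ℝ (Fin n)) :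
    |∑ i, ∑ j, u i * B i j * v j| ≤ ‖B‖ * ‖u‖ * ‖v‖ := by
  set T := (Matrix.toEuclideanLin B).toContinuousLinearMap with hT
  have h1 : ∑ i, ∑ j, u i * B i j * v j = ⟪u, T v⟫ := by
    rw [aux_inner_euc]
    refine Finset.sum_congr rfl fun i _ => ?_
    rw [aux_mulVec_euc, Finset.mul_sum]
    exact Finset.sum_congr rfl fun j _ => by ring
  rw [h1]
  calc |⟪u, T v⟫| ≤ ‖u‖ * ‖T v‖ := abs_real_inner_le_norm _ _
    _ ≤ ‖u‖ * (‖B‖ * ‖v‖) :=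
        mul_le_mul_of_nonneg_left (T.le_opNorm v) (norm_nonneg u)
    _ = ‖B‖ * ‖u‖ * ‖v‖ := by ring

open scoped MatrixOrder in
/-- Schur product bound: if `A` is PSD with diagonal entries at most `c`,
then `‖A ∘ B‖ ≤ c * ‖B‖`. -/
lemma aux_schur (A B : Matrix (Fin n) (Fin n) ℝ) (hA : A.PosSemidef) (c : ℝ) (hc : 0 ≤ c)
    (hdiag : ∀ i, A i i ≤ c) :
    ‖(Matrix.of fun i j => A i j * B i j : Matrix (Fin n) (Fin n) ℝ)‖ ≤ c * ‖B‖ := by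
  refine aux_norm_le_bilin _ _ (by positivity) fun x y => ?_
  set C := CFC.sqrt A with hCdef
  have hCC : C * C = A := CFC.sqrt_mul_sqrt_self A hA.nonneg
  have hCsym : ∀ i j, C i j = C j i := by
    intro i j
    have h2 := congrFun (congrFun (Matrix.nonneg_iff_posSemidef.mp (CFC.sqrt_nonneg A)).isHermitian j) i
    simpa [Matrix.conjTranspose_apply] using h2
  have hAentry : ∀ i j, A i j = ∑ k, C k i * C k j := by
    intro i j
    rw [← hCC, Matrix.mul_apply]
    exact Finset.sum_congr rfl fun k _ => by rw [hCsym i k]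
  -- vectors u k, v k
  set u : Fin n → EuclideanSpace ℝ (Fin n) := fun k => WithLp.toLp 2 (fun i => x i * C k i) with hu
  set v : Fin n → EuclideanSpace ℝ (Fin n) := fun k => WithLp.toLp 2 (fun j => C k j * y j) with hv
  have hswap : ∀ g : Fin n → Fin n → Fin n → ℝ,
      ∑ i, ∑ j, ∑ k, g i j k = ∑ k, ∑ i, ∑ j, g i j k := by
    intro g
    calc ∑ i, ∑ j, ∑ k, g i j k
        = ∑ i, ∑ k, ∑ j, g i j k := Finset.sum_congr rfl fun i _ => Finset.sum_comm
      _ = ∑ k, ∑ i, ∑ j, g i j k := Finset.sum_comm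
  have hsplit : ∑ i, ∑ j, x i * ((Matrix.of fun i j => A i j * B i j : Matrix (Fin n) (Fin n) ℝ) i j) * y j
      = ∑ k, ∑ i, ∑ j, (u k) i * B i j * (v k) j := by
    rw [← hswap]
    refine Finset.sum_congr rfl fun i _ => Finset.sum_congr rfl fun j _ => ?_
    simp only [Matrix.of_apply, hAentry i j, Finset.sum_mul, Finset.mul_sum]
    refine Finset.sum_congr rfl fun k _ => ?_
    simp only [hu, hv, WithLp.ofLp_toLp]
    ring
  rw [hsplit]
  -- sums of squared norms
  have husq : ∑ k, ‖u k‖ ^ 2 ≤ c * ‖x‖ ^ 2 := by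
    have : ∑ k, ‖u k‖ ^ 2 = ∑ i, (x i * x i) * A i i := by
      simp only [aux_norm_sq_eq]
      rw [Finset.sum_comm]
      refine Finset.sum_congr rfl fun i _ => ?_
      rw [hAentry i i, Finset.mul_sum]
      exact Finset.sum_congr rfl fun k _ => by simp only [hu, WithLp.ofLp_toLp]; ring
    rw [this, aux_norm_sq_eq, Finset.mul_sum]
    refine Finset.sum_le_sum fun i _ => ?_
    have h1 : 0 ≤ x i * x i := mul_self_nonneg _
    calc (x i * x i) * A i i ≤ (x i * x i) * c := mul_le_mul_of_nonneg_left (hdiag i) h1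
      _ = c * (x i * x i) := by ring
  have hvsq : ∑ k, ‖v k‖ ^ 2 ≤ c * ‖y‖ ^ 2 := by
    have : ∑ k, ‖v k‖ ^ 2 = ∑ j, (y j * y j) * A j j := by
      simp only [aux_norm_sq_eq]
      rw [Finset.sum_comm]
      refine Finset.sum_congr rfl fun j _ => ?_
      rw [hAentry j j, Finset.mul_sum]
      exact Finset.sum_congr rfl fun k _ => by simp only [hv, WithLp.ofLp_toLp]; ring
    rw [this, aux_norm_sq_eq, Finset.mul_sum]
    refine Finset.sum_le_sum fun j _ => ?_
    have h1 : 0 ≤ y j * y j := mul_self_nonneg _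
    calc (y j * y j) * A j j ≤ (y j * y j) * c := mul_le_mul_of_nonneg_left (hdiag j) h1
      _ = c * (y j * y j) := by ring
  calc |∑ k, ∑ i, ∑ j, (u k) i * B i j * (v k) j|
      ≤ ∑ k, |∑ i, ∑ j, (u k) i * B i j * (v k) j| := Finset.abs_sum_le_sum_abs _ _
    _ ≤ ∑ k, ‖B‖ * ‖u k‖ * ‖v k‖ :=
        Finset.sum_le_sum fun k _ => aux_bilin_le_norm B (u k) (v k)
    _ = ‖B‖ * ∑ k, ‖u k‖ * ‖v k‖ := by rw [Finset.mul_sum]; exact Finset.sum_congr rfl fun k _ => by ring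
    _ ≤ ‖B‖ * (c * ‖x‖ * ‖y‖) := by
        refine mul_le_mul_of_nonneg_left ?_ (norm_nonneg B)
        have hCS : (∑ k, ‖u k‖ * ‖v k‖) ^ 2 ≤ (∑ k, ‖u k‖ ^ 2) * ∑ k, ‖v k‖ ^ 2 :=
          Finset.sum_mul_sq_le_sq_mul_sq _ _ _
        have hbound : (∑ k, ‖u k‖ * ‖v k‖) ^ 2 ≤ (c * ‖x‖ * ‖y‖) ^ 2 := by
          calc (∑ k, ‖u k‖ * ‖v k‖) ^ 2 ≤ (∑ k, ‖u k‖ ^ 2) * ∑ k, ‖v k‖ ^ 2 := hCS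
            _ ≤ (c * ‖x‖ ^ 2) * (c * ‖y‖ ^ 2) := by
                refine mul_le_mul husq hvsq (Finset.sum_nonneg fun k _ => sq_nonneg _) (by positivity)
            _ = (c * ‖x‖ * ‖y‖) ^ 2 := by ring
        have h0 : 0 ≤ ∑ k, ‖u k‖ * ‖v k‖ :=
          Finset.sum_nonneg fun k _ => mul_nonneg (norm_nonneg _) (norm_nonneg _)
        have h1 : 0 ≤ c * ‖x‖ * ‖y‖ := by positivity
        nlinarith
    _ = c * ‖B‖ * ‖x‖ * ‖y‖ := by ring

lemma aux_diagonal (d : Fin n → ℝ) (c : ℝ) (hc : 0 ≤ c) (hd : ∀ i, |d i| ≤ c) :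
    ‖(Matrix.diagonal d : Matrix (Fin n) (Fin n) ℝ)‖ ≤ c := by
  refine aux_norm_le_bilin _ _ hc fun x y => ?_
  have heq : ∑ i, ∑ j, x i * (Matrix.diagonal d) i j * y j = ∑ i, x i * d i * y i := by
    refine Finset.sum_congr rfl fun i _ => ?_
    rw [Finset.sum_eq_single i (fun j _ hj => by
      simp [Matrix.diagonal_apply_ne' d hj]) (by simp)]
    simp [Matrix.diagonal_apply_eq]
  rw [heq]
  calc |∑ i, x i * d i * y i| ≤ ∑ i, |x i * d i * y i| := Finset.abs_sum_le_sum_abs _ _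
    _ ≤ ∑ i, c * (|x i| * |y i|) := by
        refine Finset.sum_le_sum fun i _ => ?_
        rw [abs_mul, abs_mul]
        calc |x i| * |d i| * |y i| ≤ |x i| * c * |y i| := by
              refine mul_le_mul_of_nonneg_right ?_ (abs_nonneg _)
              exact mul_le_mul_of_nonneg_left (hd i) (abs_nonneg _)
          _ = c * (|x i| * |y i|) := by ring
    _ = c * ∑ i, |x i| * |y i| := (Finset.mul_sum _ _ _).symm
    _ ≤ c * (‖x‖ * ‖y‖) := by
        refine mul_le_mul_of_nonneg_left ?_ hc
        have hCS : (∑ i, |x i| * |y i|) ^ 2 ≤ (∑ i, |x i| ^ 2) * ∑ i, |y i| ^ 2 :=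
          Finset.sum_mul_sq_le_sq_mul_sq _ _ _
        have hx2 : ∑ i, |x i| ^ 2 = ‖x‖ ^ 2 := by
          rw [aux_norm_sq_eq]; exact Finset.sum_congr rfl fun i _ => by rw [sq_abs]; ring
        have hy2 : ∑ i, |y i| ^ 2 = ‖y‖ ^ 2 := by
          rw [aux_norm_sq_eq]; exact Finset.sum_congr rfl fun i _ => by rw [sq_abs]; ring
        have h0 : 0 ≤ ∑ i, |x i| * |y i| :=
          Finset.sum_nonneg fun i _ => mul_nonneg (abs_nonneg _) (abs_nonneg _)
        have hb : (∑ i, |x i| * |y i|) ^ 2 ≤ (‖x‖ * ‖y‖) ^ 2 := by nlinarith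
        have h1 : 0 ≤ ‖x‖ * ‖y‖ := mul_nonneg (norm_nonneg _) (norm_nonneg _)
        nlinarith
    _ = c * ‖x‖ * ‖y‖ := by ring

end Aux

open scoped Matrix.Norms.L2Operator in
theorem stmt_4 (n : ℕ) (Δ : Matrix (Fin n) (Fin n) ℝ) (hsym : Δ.IsSymm)
    (hpsd : (1 + Δ).PosSemidef) (r : ℕ) (hr : 1 ≤ r) :
    specNorm (hadPow Δ (r + 1)) ≤
      (1 + maxNorm Δ) * specNorm (hadPow Δ r) + maxNorm Δ ^ r := by
  rcases Nat.eq_zero_or_pos n with hn | hn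
  · subst hn
    have h0 : ∀ k, hadPow Δ k = 0 := fun k => Subsingleton.elim _ _
    have hm : maxNorm Δ = 0 := by
      simp [maxNorm, Real.iSup_of_isEmpty]
    rw [aux_specNorm_eq_norm, aux_specNorm_eq_norm, h0, h0, hm]
    simp [zero_pow (by omega : r ≠ 0)]
  · haveI : Nonempty (Fin n) := ⟨⟨0, hn⟩⟩
    set a := maxNorm Δ with ha
    have habs : ∀ i j, |Δ i j| ≤ a := by
      intro i j
      have h1 : |Δ i j| ≤ ⨆ j', |Δ i j'| :=
        le_ciSup (f := fun j' => |Δ i j'|) (Set.Finite.bddAbove (Set.finite_range _)) j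
      exact h1.trans (le_ciSup (f := fun i' => ⨆ j', |Δ i' j'|)
        (Set.Finite.bddAbove (Set.finite_range _)) i)
    have ha0 : 0 ≤ a := (abs_nonneg _).trans (habs ⟨0, hn⟩ ⟨0, hn⟩)
    set M₁ : Matrix (Fin n) (Fin n) ℝ :=
      Matrix.of (fun i j => (1 + Δ) i j * (hadPow Δ r) i j) with hM₁
    set M₂ : Matrix (Fin n) (Fin n) ℝ := Matrix.diagonal (fun i => Δ i i ^ r) with hM₂
    have hdecomp : hadPow Δ (r + 1) = M₁ - M₂ := by
      ext i j
      by_cases hij : i = j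
      · subst hij
        simp [hM₁, hM₂, hadPow, Matrix.add_apply, Matrix.one_apply_eq, pow_succ]
        ring
      · simp [hM₁, hM₂, hadPow, Matrix.add_apply, Matrix.one_apply_ne hij,
          Matrix.diagonal_apply_ne _ hij, pow_succ]
        ring
    rw [aux_specNorm_eq_norm, aux_specNorm_eq_norm, hdecomp]
    have h1 : ‖M₁‖ ≤ (1 + a) * ‖hadPow Δ r‖ := by
      refine aux_schur (1 + Δ) (hadPow Δ r) hpsd (1 + a) (by linarith) fun i => ?_
      have : Δ i i ≤ a := (le_abs_self _).trans (habs i i)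
      simp only [Matrix.add_apply, Matrix.one_apply_eq]
      linarith
    have h2 : ‖M₂‖ ≤ a ^ r := by
      refine aux_diagonal _ _ (by positivity) fun i => ?_
      rw [abs_pow]
      exact pow_le_pow_left₀ (abs_nonneg _) (habs i i) r
    calc ‖M₁ - M₂‖ ≤ ‖M₁‖ + ‖M₂‖ := norm_sub_le _ _
      _ ≤ (1 + a) * ‖hadPow Δ r‖ + a ^ r := add_le_add h1 h2
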